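/- Let u : ℝ² → ℝ² be C², globally Lipschitz, with divergence ∇·u, and let x̄ : ℝ → ℝ² solve x̄′(p) = u(x̄(p)) with u(x̄(p)) ≠ 0 for every p. Fix p^u < p^d, set a = x̄(p^u), and suppose (open-interface condition) there is δ > 0 such that w(x,t) = 0 for all t whenever |x − x̄(p)| < δ for some p ≤ p^u or some p ≥ p^d. Define M^u_ε(p,t) := 0 for p < p^u, and for p ≥ p^u, M^u_ε(p,t) := ε ∫_{p^u}^{min(p,p^d)} exp(∫_τ^p (∇·u)(x̄(ξ)) dξ) ⟨J u(x̄(τ)), w(x̄(τ), τ + t − p)⟩ dτ. Then for every P > 0 there exist C > 0 and ε₀ > 0 such that for all p ∈ [−P, P], all t ∈ ℝ, and all ε ∈ (0, ε₀], |⟨x_ε^u(p,t) − x̄(p), n̂(p)⟩ − M^u_ε(p,t)/|u(x̄(p))|| ≤ C ε². -/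

import Mathlib

open scoped InnerProductSpace NNReal

noncomputable section

open Set intervalIntegral

set_option maxHeartbeats 1000000

/-- The plane with its Euclidean inner product. -/
abbrev E2 : Type := EuclideanSpace ℝ (Fin 2)

/-- Rotation by +π/2 : J(x₁,x₂) = (−x₂, x₁). -/
noncomputable def Jrot : E2 → E2 :=
  fun x => (WithLp.equiv 2 (Fin 2 → ℝ)).symm ![-(x 1), x 0]

/-- Divergence of a planar vector field, as the trace of its Fréchet derivative. -/
noncomputable def div2 (u : E2 → E2) (x : E2) : ℝ :=
  LinearMap.trace ℝ E2 (fderiv ℝ u x).toLinearMap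

/-- The leading-order upstream streakline displacement function (open interface):
zero for `p < pu`, and otherwise the Melnikov-type integral. -/
noncomputable def MuOpen (u : E2 → E2) (xbar : ℝ → E2) (w : E2 → ℝ → E2)
    (pu pd ε p t : ℝ) : ℝ :=
  if p < pu then 0
  else ε * ∫ τ in pu..(min p pd),
    Real.exp (∫ ξ in τ..p, div2 u (xbar ξ)) *
      ⟪Jrot (u (xbar τ)), w (xbar τ) (τ + t - p)⟫_ℝ

lemma Jrot_apply0 (x : E2) : Jrot x 0 = -(x 1) := rfl
lemma Jrot_apply1 (x : E2) : Jrot x 1 = x 0 := rfl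

lemma inner_E2 (x y : E2) : ⟪x, y⟫_ℝ = x 0 * y 0 + x 1 * y 1 := by
  simp [PiLp.inner_apply, Fin.sum_univ_two, mul_comm]

lemma Jrot_inner (v y : E2) : ⟪Jrot v, y⟫_ℝ = -(v 1) * y 0 + v 0 * y 1 := by
  rw [inner_E2, Jrot_apply0, Jrot_apply1]

lemma Jrot_add (x y : E2) : Jrot (x + y) = Jrot x + Jrot y := by
  ext i; fin_cases i <;> simp [Jrot] <;> ring

lemma Jrot_smul (c : ℝ) (x : E2) : Jrot (c • x) = c • Jrot x := by
  ext i; fin_cases i <;> simp [Jrot] <;> ring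

noncomputable def JL : E2 →L[ℝ] E2 :=
  LinearMap.toContinuousLinearMap
    { toFun := Jrot, map_add' := Jrot_add, map_smul' := Jrot_smul }

lemma JL_apply (x : E2) : JL x = Jrot x := rfl

lemma Jrot_norm (x : E2) : ‖Jrot x‖ = ‖x‖ := by
  rw [EuclideanSpace.norm_eq, EuclideanSpace.norm_eq]
  congr 1
  simp [Fin.sum_univ_two, Jrot_apply0, Jrot_apply1]
  ring

lemma E2_decomp (x : E2) :
    x = x 0 • (EuclideanSpace.single 0 1 : E2) + x 1 • EuclideanSpace.single 1 1 := by
  ext i; fin_cases i <;> simp [EuclideanSpace.single_apply]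

lemma trace_eq (A : E2 →L[ℝ] E2) :
    LinearMap.trace ℝ E2 A.toLinearMap
      = A (EuclideanSpace.single 0 1) 0 + A (EuclideanSpace.single 1 1) 1 := by
  rw [LinearMap.trace_eq_matrix_trace ℝ (EuclideanSpace.basisFun (Fin 2) ℝ).toBasis]
  rw [Matrix.trace]
  simp [Matrix.diag, LinearMap.toMatrix_apply, Fin.sum_univ_two,
    EuclideanSpace.basisFun_apply]

lemma trace_identity (A : E2 →L[ℝ] E2) (v y : E2) :
    ⟪Jrot (A v), y⟫_ℝ + ⟪Jrot v, A y⟫_ℝ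
      = (LinearMap.trace ℝ E2 A.toLinearMap) * ⟪Jrot v, y⟫_ℝ := by
  rw [trace_eq]
  rw [Jrot_inner, Jrot_inner, Jrot_inner]
  have hv := E2_decomp v
  have hy := E2_decomp y
  set E0 : E2 := EuclideanSpace.single 0 1
  set E1 : E2 := EuclideanSpace.single 1 1
  have hAv : A v = v 0 • A E0 + v 1 • A E1 := by rw [← map_smul, ← map_smul, ← map_add, ← hv]
  have hAy : A y = y 0 • A E0 + y 1 • A E1 := by rw [← map_smul, ← map_smul, ← map_add, ← hy]
  rw [hAv, hAy]
  simp only [PiLp.add_apply, PiLp.smul_apply, smul_eq_mul]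
  ring

lemma exp_sub_one_le (t : ℝ) (ht : 0 ≤ t) : Real.exp t - 1 ≤ t * Real.exp t := by
  have h1 : -t + 1 ≤ Real.exp (-t) := by linarith [Real.add_one_le_exp (-t)]
  have h2 : Real.exp (-t) * Real.exp t = 1 := by rw [← Real.exp_add]; simp
  nlinarith [Real.exp_pos t]

lemma gronwall_aux {K c x L : ℝ} (hK : 0 ≤ K) (hc : 0 ≤ c) (hx : 0 ≤ x) (hxL : x ≤ L) :
    gronwallBound 0 K c x ≤ c * L * Real.exp (K * L) := by
  have hL : 0 ≤ L := le_trans hx hxL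
  have hexp1 : (1:ℝ) ≤ Real.exp (K * L) := by
    rw [← Real.exp_zero]; exact Real.exp_le_exp.2 (by positivity)
  rcases eq_or_lt_of_le hK with hK0 | hKpos
  · rw [← hK0]
    simp [gronwallBound]
    nlinarith
  · rw [gronwallBound_of_K_ne_0 (ne_of_gt hKpos)]
    have h1 : Real.exp (K * x) - 1 ≤ (K * x) * Real.exp (K * x) :=
      exp_sub_one_le _ (by positivity)
    have h2 : Real.exp (K * x) ≤ Real.exp (K * L) :=
      Real.exp_le_exp.2 (by nlinarith)
    have h3 : c / K * (Real.exp (K * x) - 1) ≤ c / K * ((K * x) * Real.exp (K * x)) := by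
      apply mul_le_mul_of_nonneg_left h1 (by positivity)
    have h4 : c / K * ((K * x) * Real.exp (K * x)) = c * x * Real.exp (K * x) := by
      field_simp
    have h5 : c * x * Real.exp (K * x) ≤ c * L * Real.exp (K * L) := by
      apply mul_le_mul (by nlinarith) h2 (by positivity) (by positivity)
    nlinarith [Real.exp_pos (K*x)]

lemma taylor_bound {u : E2 → E2} (hu : ContDiff ℝ 2 u) {S : Set E2} {C₂ : ℝ}
    (hC₂ : ∀ x ∈ S, ‖fderiv ℝ (fderiv ℝ u) x‖ ≤ C₂) {x y : E2}
    (hxy : ‖y - x‖ ≤ 1) (hball : Metric.closedBall x 1 ⊆ S) :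
    ‖u y - u x - fderiv ℝ u x (y - x)‖ ≤ C₂ * ‖y - x‖ ^ 2 := by
  have hfd1 : ContDiff ℝ 1 (fderiv ℝ u) := hu.fderiv_right (by norm_num)
  set s : Set E2 := Metric.closedBall x ‖y - x‖ with hs
  have hsS : s ⊆ S := le_trans (Metric.closedBall_subset_closedBall hxy) hball
  have hxs : x ∈ s := Metric.mem_closedBall_self (norm_nonneg _)
  have hys : y ∈ s := by
    simp [hs, Metric.mem_closedBall, dist_eq_norm]
  have hC₂0 : 0 ≤ C₂ := le_trans (norm_nonneg (fderiv ℝ (fderiv ℝ u) x)) (by exact hC₂ x (hball (Metric.mem_closedBall_self one_pos.le)))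
  have stepA : ∀ z ∈ s, ‖fderiv ℝ u z - fderiv ℝ u x‖ ≤ C₂ * ‖y - x‖ := by
    intro z hz
    have h1 : ‖fderiv ℝ u z - fderiv ℝ u x‖ ≤ C₂ * ‖z - x‖ :=
      (convex_closedBall x ‖y - x‖).norm_image_sub_le_of_norm_fderiv_le
        (fun a _ => (hfd1.differentiable one_ne_zero).differentiableAt)
        (fun a ha => hC₂ a (hsS ha)) hxs hz
    have h2 : ‖z - x‖ ≤ ‖y - x‖ := by
      simpa [dist_eq_norm] using (Metric.mem_closedBall.1 hz)
    calc ‖fderiv ℝ u z - fderiv ℝ u x‖ ≤ C₂ * ‖z - x‖ := h1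
      _ ≤ C₂ * ‖y - x‖ := by nlinarith
  have := (convex_closedBall x ‖y - x‖).norm_image_sub_le_of_norm_fderiv_le'
    (fun a _ => (hu.differentiable (by norm_num)).differentiableAt) stepA hxs hys
  calc ‖u y - u x - fderiv ℝ u x (y - x)‖ ≤ C₂ * ‖y - x‖ * ‖y - x‖ := this
    _ = C₂ * ‖y - x‖ ^ 2 := by ring

lemma zbound {K c : ℝ} {z z' : ℝ → E2} {a b : ℝ}
    (hz : ∀ s, HasDerivAt z (z' s) s) (hz0 : z a = 0)
    (hbd : ∀ s ∈ Set.Icc a b, ‖z' s‖ ≤ K * ‖z s‖ + c) :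
    ∀ s ∈ Set.Icc a b, ‖z s‖ ≤ gronwallBound 0 K c (s - a) := by
  apply norm_le_gronwallBound_of_norm_deriv_right_le
  · exact (fun s _ => ((hz s).continuousAt.continuousWithinAt))
  · exact fun s _ => (hz s).hasDerivWithinAt
  · simp [hz0]
  · exact fun s hs => hbd s (Set.Ico_subset_Icc_self hs)


/-- **Upstream streakline theorem, open interface.**  For a steady C² globally
Lipschitz planar field `u` with a nonvanishing streakline `x̄`, and a bounded C¹
agitation `w` vanishing near the streakline upstream of `a = x̄(pu)` and
downstream of `b = x̄(pd)`, the normal displacement of the agitated upstream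
streakline `x_ε^u(p,t)` from `x̄(p)` equals `M^u_ε(p,t)/|u(x̄(p))|` up to an
error of order `ε²`, uniformly for `p ∈ [−P,P]` and `t ∈ ℝ`. -/
theorem upstream_streakline_open
    (u : E2 → E2) (hu : ContDiff ℝ 2 u)
    (K : ℝ≥0) (huLip : LipschitzWith K u)
    (xbar : ℝ → E2) (hxbar : ∀ p : ℝ, HasDerivAt xbar (u (xbar p)) p)
    (hune : ∀ p : ℝ, u (xbar p) ≠ 0)
    (pu pd : ℝ) (hpp : pu < pd)
    (w : E2 → ℝ → E2) (hw : ContDiff ℝ 1 (Function.uncurry w))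
    (Cw : ℝ) (hwbdd : ∀ (x : E2) (t : ℝ), ‖w x t‖ ≤ Cw)
    (Kw : ℝ≥0) (hwLip : ∀ t : ℝ, LipschitzWith Kw (fun x => w x t))
    (δ : ℝ) (hδ : 0 < δ)
    (hopen : ∀ (x : E2) (t : ℝ),
      (∃ p : ℝ, (p ≤ pu ∨ pd ≤ p) ∧ ‖x - xbar p‖ < δ) → w x t = 0) :
    ∀ P > (0:ℝ), ∃ C > (0:ℝ), ∃ ε₀ > (0:ℝ),
      ∀ p ∈ Set.Icc (-P) P, ∀ t : ℝ, ∀ ε ∈ Set.Ioc (0:ℝ) ε₀,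
        ∀ X : ℝ → E2,
          (∀ s : ℝ, HasDerivAt X (u (X s) + ε • w (X s) s) s) →
          X (t - p + pu) = xbar pu →
          |⟪X t - xbar p, (‖u (xbar p)‖)⁻¹ • Jrot (u (xbar p))⟫_ℝ
            - MuOpen u xbar w pu pd ε p t / ‖u (xbar p)‖| ≤ C * ε ^ 2 := by
  intro P hP
  -- continuity facts
  have hcu : Continuous u := hu.continuous
  have hdx : Differentiable ℝ xbar := fun q => (hxbar q).differentiableAt
  have hcx : Continuous xbar := hdx.continuous
  have hfd1 : ContDiff ℝ 1 (fderiv ℝ u) := hu.fderiv_right (by norm_num)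
  have hcfd : Continuous (fderiv ℝ u) := hfd1.continuous
  have hcfd2 : Continuous (fderiv ℝ (fderiv ℝ u)) := (hfd1.fderiv_right (m := 0) (by norm_num)).continuous
  have hdivc : Continuous (fun ξ : ℝ => div2 u (xbar ξ)) := by
    have h1 : Continuous (fun A : E2 →L[ℝ] E2 => LinearMap.trace ℝ E2 A.toLinearMap) :=
      LinearMap.continuous_of_finiteDimensional
        ((LinearMap.trace ℝ E2).comp (ContinuousLinearMap.coeLM ℝ))
    exact h1.comp (hcfd.comp hcx)
  -- constants
  set L := |pu| + |pd| + P + 1 with hLdef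
  have hL0 : 0 < L := by positivity
  have habs1 : -L ≤ pu ∧ pu ≤ L := by
    constructor <;> [nlinarith [neg_abs_le pu, abs_nonneg pd]; nlinarith [le_abs_self pu, abs_nonneg pd]]
  have habs2 : -L ≤ pd ∧ pd ≤ L := by
    constructor <;> [nlinarith [neg_abs_le pd, abs_nonneg pu]; nlinarith [le_abs_self pd, abs_nonneg pu]]
  have hPL : P ≤ L := by nlinarith [abs_nonneg pu, abs_nonneg pd]
  have hCw0 : 0 ≤ Cw := le_trans (norm_nonneg _) (hwbdd 0 0)
  set C₁ := Cw * (2*L) * Real.exp (K * (2*L)) with hC₁def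
  have hC₁0 : 0 ≤ C₁ := by positivity
  set ε₀ := min (1 / (C₁+1)) (δ / (2*(C₁+1))) with hε₀def
  have hε₀pos : 0 < ε₀ := lt_min (by positivity) (by positivity)
  -- compact set and bounds
  have hKc : IsCompact (xbar '' Set.Icc (-L) L) := isCompact_Icc.image hcx
  set S := Metric.cthickening 1 (xbar '' Set.Icc (-L) L) with hSdef
  obtain ⟨C₂', hC₂'⟩ := (hKc.cthickening (r := 1)).exists_bound_of_continuousOn (f := fderiv ℝ (fderiv ℝ u)) (by exact hcfd2.continuousOn)
  set C₂ := max C₂' 0 with hC₂def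
  have hC₂ : ∀ x ∈ S, ‖fderiv ℝ (fderiv ℝ u) x‖ ≤ C₂ := fun x hx =>
    le_trans (hC₂' x hx) (le_max_left _ _)
  have hC₂0 : (0:ℝ) ≤ C₂ := le_max_right _ _
  obtain ⟨Um', hUm'⟩ := isCompact_Icc.exists_bound_of_continuousOn
    (s := Set.Icc (-L) L) ((hcu.comp hcx).continuousOn)
  set Umax := max Um' 0 with hUmaxdef
  have hUmax : ∀ q ∈ Set.Icc (-L) L, ‖u (xbar q)‖ ≤ Umax := fun q hq =>
    le_trans (hUm' q hq) (le_max_left _ _)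
  have hUmax0 : (0:ℝ) ≤ Umax := le_max_right _ _
  obtain ⟨Dm', hDm'⟩ := isCompact_Icc.exists_bound_of_continuousOn
    (s := Set.Icc (-L) L) hdivc.continuousOn
  set Dmax := max Dm' 0 with hDmaxdef
  have hDmax : ∀ q ∈ Set.Icc (-L) L, |div2 u (xbar q)| ≤ Dmax := fun q hq =>
    le_trans (le_trans (le_of_eq (Real.norm_eq_abs _).symm) (hDm' q hq)) (le_max_left _ _)
  have hDmax0 : (0:ℝ) ≤ Dmax := le_max_right _ _
  -- umin
  have hne : (Set.Icc (-P) P).Nonempty := ⟨0, by constructor <;> linarith⟩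
  obtain ⟨q₀, hq₀mem, hq₀min⟩ := isCompact_Icc.exists_isMinOn hne
    ((hcu.comp hcx).norm.continuousOn)
  set umin := ‖u (xbar q₀)‖ with humindef
  have huminpos : 0 < umin := norm_pos_iff.2 (hune q₀)
  have huminle : ∀ q ∈ Set.Icc (-P) P, umin ≤ ‖u (xbar q)‖ := fun q hq => hq₀min hq
  set eB := Real.exp (Dmax * (2*L)) with heBdef
  set Cmain := eB * Umax * (C₂ * C₁^2 + Kw * C₁) with hCmaindef
  have hCmain0 : 0 ≤ Cmain := by positivity
  refine ⟨2*L*Cmain/umin + 1, by positivity, ε₀, hε₀pos, ?_⟩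
  intro p hp t ε hε X hX hX0
  have hεpos : 0 < ε := hε.1
  have hC₁1pos : (0:ℝ) < C₁ + 1 := by linarith
  have hεC₁' : ε * (C₁ + 1) ≤ δ / 2 := by
    have h1 : ε ≤ δ / (2*(C₁+1)) := le_trans hε.2 (min_le_right _ _)
    have h2 := mul_le_mul_of_nonneg_right h1 hC₁1pos.le
    calc ε * (C₁+1) ≤ δ / (2*(C₁+1)) * (C₁+1) := h2
      _ = δ / 2 := by field_simp
  have hεC₁δ : ε * C₁ < δ := by
    have hr : ε * C₁ + ε = ε * (C₁ + 1) := by ring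
    linarith only [hr, hεC₁', hεpos, hδ]
  have hεC₁1 : ε * C₁ ≤ 1 := by
    have h1 : ε ≤ 1 / (C₁+1) := le_trans hε.2 (min_le_left _ _)
    have h2 := mul_le_mul_of_nonneg_right h1 hC₁1pos.le
    have h3 : (1:ℝ) / (C₁+1) * (C₁+1) = 1 := by field_simp
    have hr : ε * C₁ + ε = ε * (C₁ + 1) := by ring
    linarith only [hr, h2, h3, hεpos]
  -- shifted solution
  set Y : ℝ → E2 := fun q => X (q + t - p) with hYdef
  have hY : ∀ q, HasDerivAt Y (u (Y q) + ε • w (Y q) (q + t - p)) q := by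
    intro q
    have h1 : HasDerivAt (fun q : ℝ => q + t - p) 1 q := by
      simpa using ((hasDerivAt_id q).add_const t).sub_const p
    have h2 := (hX (q + t - p)).scomp q h1
    rw [one_smul] at h2; exact h2
  have hY0 : Y pu = xbar pu := by
    have : pu + t - p = t - p + pu := by ring
    simp only [hYdef, this]; exact hX0
  set z : ℝ → E2 := fun q => Y q - xbar q with hzdef
  set z' : ℝ → E2 := fun q => u (Y q) + ε • w (Y q) (q + t - p) - u (xbar q) with hz'def
  have hz : ∀ q, HasDerivAt z (z' q) q := fun q => (hY q).sub (hxbar q)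
  have hz0 : z pu = 0 := by simp [hzdef, hY0]
  have hderb : ∀ q, ‖z' q‖ ≤ K * ‖z q‖ + ε * Cw := by
    intro q
    have heq : z' q = (u (Y q) - u (xbar q)) + ε • w (Y q) (q + t - p) := by
      simp only [hz'def]; abel
    rw [heq]
    refine le_trans (norm_add_le _ _) (add_le_add ?_ ?_)
    · have := huLip.dist_le_mul (Y q) (xbar q)
      rw [dist_eq_norm, dist_eq_norm] at this
      exact this
    · rw [norm_smul, Real.norm_eq_abs, abs_of_pos hεpos]
      exact mul_le_mul_of_nonneg_left (hwbdd _ _) hεpos.le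
  by_cases hcase : p < pu
  · -- upstream of a: exact agreement
    set f : ℝ → E2 := fun s => z (pu - s) with hfdef
    have hf : ∀ s, HasDerivAt f (-(z' (pu - s))) s := by
      intro s
      have h1 : HasDerivAt (fun s : ℝ => pu - s) (-1) s := by
        exact ((hasDerivAt_const s pu).sub (hasDerivAt_id s)).congr_deriv (by norm_num)
      have h2 := (hz (pu - s)).scomp s h1
      rw [neg_one_smul] at h2; exact h2
    have hf0 : f 0 = 0 := by simp [hfdef, hz0]
    have hIlen : pu - p ≤ 2 * L := by
      linarith only [habs1.2, hp.1, hPL, hL0.le]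
    have hstep1 : ∀ s ∈ Set.Icc (0:ℝ) (pu - p), ‖f s‖ ≤ ε * C₁ := by
      intro s hs
      have hb := zbound hf hf0 (fun s _ => by
        rw [norm_neg]; exact hderb (pu - s)) s hs
      refine le_trans hb ?_
      rw [sub_zero]
      have := gronwall_aux (K.coe_nonneg) (by positivity : (0:ℝ) ≤ ε * Cw)
        hs.1 (le_trans hs.2 hIlen) (L := 2*L)
      refine le_trans this (le_of_eq ?_)
      rw [hC₁def]; ring
    have hvanish : ∀ s ∈ Set.Icc (0:ℝ) (pu - p), ∀ τ : ℝ, w (Y (pu - s)) τ = 0 := by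
      intro s hs τ
      refine hopen _ _ ⟨pu - s, Or.inl (by linarith [hs.1]), ?_⟩
      calc ‖Y (pu - s) - xbar (pu - s)‖ = ‖f s‖ := rfl
        _ ≤ ε * C₁ := hstep1 s hs
        _ < δ := hεC₁δ
    have hstep2 : ∀ s ∈ Set.Icc (0:ℝ) (pu - p), ‖f s‖ ≤ gronwallBound 0 K 0 (s - 0) := by
      apply zbound hf hf0
      intro s hs
      have hz'eq : z' (pu - s) = u (Y (pu - s)) - u (xbar (pu - s)) := by
        simp only [hz'def, hvanish s hs, smul_zero, add_zero]
      rw [norm_neg, hz'eq, add_zero]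
      have := huLip.dist_le_mul (Y (pu - s)) (xbar (pu - s))
      rw [dist_eq_norm, dist_eq_norm] at this
      exact this
    have hzp : z p = 0 := by
      have := hstep2 (pu - p) ⟨by linarith, le_rfl⟩
      rw [sub_zero, gronwallBound_ε0_δ0] at this
      have h0 : f (pu - p) = z p := by simp [hfdef]
      rw [h0] at this
      exact norm_le_zero_iff.1 this
    have hXt : X t = Y p := by simp [hYdef, show p + t - p = t by ring]
    have hXz : X t - xbar p = 0 := by rw [hXt]; exact hzp
    simp only [MuOpen, if_pos hcase, hXz, inner_zero_left, zero_div, sub_zero, abs_zero]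
    positivity
  · -- main case pu ≤ p
    push_neg at hcase
    have hpL : p ≤ L := le_trans hp.2 hPL
    have hplen : p - pu ≤ 2*L := by linarith only [habs1.1, hpL]
    have hIccL : Set.Icc pu p ⊆ Set.Icc (-L) L := Set.Icc_subset_Icc habs1.1 hpL
    have hzb : ∀ q ∈ Set.Icc pu p, ‖z q‖ ≤ ε * C₁ := by
      intro q hq
      have hb := zbound hz hz0 (fun s _ => hderb s) q hq
      refine le_trans hb ?_
      have h2 := gronwall_aux K.coe_nonneg (by positivity : (0:ℝ) ≤ ε * Cw)
        (by linarith only [hq.1] : (0:ℝ) ≤ q - pu)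
        (by linarith only [hq.2, hplen] : q - pu ≤ 2*L)
      refine le_trans h2 (le_of_eq ?_)
      rw [hC₁def]; ring
    -- auxiliary functions
    set A : ℝ → (E2 →L[ℝ] E2) := fun q => fderiv ℝ u (xbar q) with hAdef
    set R : ℝ → E2 := fun q => u (Y q) - u (xbar q) - A q (z q) with hRdef
    set WY : ℝ → E2 := fun q => w (Y q) (q + t - p) with hWYdef
    set Wx : ℝ → E2 := fun q => w (xbar q) (q + t - p) with hWxdef
    set m : ℝ → ℝ := fun q => ⟪JL (u (xbar q)), z q⟫_ℝ with hmdef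
    set G : ℝ → ℝ := fun q => ∫ ξ in pu..q, div2 u (xbar ξ) with hGdef
    set g : ℝ → ℝ := fun q => Real.exp (-(G q)) * m q with hgdef
    set EE : ℝ → ℝ := fun q => Real.exp (-(G q)) * ⟪JL (u (xbar q)), R q + ε • WY q⟫_ℝ
      with hEEdef
    -- continuity facts
    have hYc : Continuous Y := Differentiable.continuous (fun q => (hY q).differentiableAt)
    have hzc : Continuous z := hYc.sub hcx
    have hAc : Continuous A := hcfd.comp hcx
    have hRc : Continuous R := ((hcu.comp hYc).sub (hcu.comp hcx)).sub (hAc.clm_apply hzc)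
    have htime : Continuous (fun q : ℝ => q + t - p) :=
      (continuous_id.add continuous_const).sub continuous_const
    have hWYc : Continuous WY := hw.continuous.comp (hYc.prodMk htime)
    have hWxc : Continuous Wx := hw.continuous.comp (hcx.prodMk htime)
    have hJLuc : Continuous (fun q => JL (u (xbar q))) := JL.continuous.comp (hcu.comp hcx)
    have hGderiv : ∀ q, HasDerivAt G (div2 u (xbar q)) q := fun q =>
      intervalIntegral.integral_hasDerivAt_right (hdivc.intervalIntegrable _ _)
        (hdivc.stronglyMeasurableAtFilter _ _) hdivc.continuousAt
    have hGcont : Continuous G :=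
      Differentiable.continuous (fun q => (hGderiv q).differentiableAt)
    have hEEc : Continuous EE :=
      ((Real.continuous_exp.comp hGcont.neg)).mul
        (hJLuc.inner (hRc.add (hWYc.const_smul ε)))
    -- derivative of m
    have hm' : ∀ q, HasDerivAt m (div2 u (xbar q) * m q
        + ⟪JL (u (xbar q)), R q + ε • WY q⟫_ℝ) q := by
      intro q
      have hdu : HasDerivAt (fun q => u (xbar q)) (A q (u (xbar q))) q :=
        ((hu.differentiable (by norm_num) (xbar q)).hasFDerivAt).comp_hasDerivAt q (hxbar q)
      have h1 : HasDerivAt (fun q => JL (u (xbar q))) (JL (A q (u (xbar q)))) q :=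
        JL.hasFDerivAt.comp_hasDerivAt q hdu
      have h2 : HasDerivAt z (A q (z q) + (R q + ε • WY q)) q := by
        have h0 := hz q
        convert h0 using 1
        simp only [hRdef, hWYdef, hz'def]
        abel
      have h3 := h1.inner ℝ h2
      refine h3.congr_deriv ?_
      rw [inner_add_right]
      have h4 := trace_identity (A q) (u (xbar q)) (z q)
      simp only [← JL_apply] at h4
      have h6 : div2 u (xbar q) = LinearMap.trace ℝ E2 (A q).toLinearMap := rfl
      have h7 : m q = ⟪JL (u (xbar q)), z q⟫_ℝ := rfl
      rw [h6, h7]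
      linarith [h4]
    -- derivative of g
    have hg' : ∀ q, HasDerivAt g (EE q) q := by
      intro q
      have h1 : HasDerivAt (fun q => Real.exp (-(G q))) (Real.exp (-(G q)) * (-(div2 u (xbar q)))) q :=
        ((hGderiv q).neg).exp
      have h2 := h1.mul (hm' q)
      have h3 : HasDerivAt g _ q := h2
      convert h3 using 1
      show Real.exp (-(G q)) * ⟪JL (u (xbar q)), R q + ε • WY q⟫_ℝ = _
      ring
    -- FTC
    have hgpu : g pu = 0 := by
      simp [hgdef, hGdef, hmdef, hz0]
    have hEEint : IntervalIntegrable EE MeasureTheory.volume pu p :=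
      hEEc.intervalIntegrable _ _
    have hFTC : (∫ q in pu..p, EE q) = g p - g pu :=
      intervalIntegral.integral_eq_sub_of_hasDerivAt (fun q _ => hg' q) hEEint
    have hmp : m p = Real.exp (G p) * ∫ q in pu..p, EE q := by
      rw [hFTC, hgpu, sub_zero, hgdef]
      simp only [← mul_assoc, ← Real.exp_add]
      simp
    have hmp2 : m p = ∫ q in pu..p,
        Real.exp (G p - G q) * ⟪JL (u (xbar q)), R q + ε • WY q⟫_ℝ := by
      rw [hmp, ← intervalIntegral.integral_const_mul]
      apply intervalIntegral.integral_congr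
      intro q hq
      simp only [hEEdef]
      rw [← mul_assoc, ← Real.exp_add, ← sub_eq_add_neg]
    have hGsub : ∀ τ : ℝ, (∫ ξ in τ..p, div2 u (xbar ξ)) = G p - G τ := by
      intro τ
      exact (intervalIntegral.integral_interval_sub_left
        (hdivc.intervalIntegrable _ _) (hdivc.intervalIntegrable _ _)).symm
    have hexpc : Continuous (fun q : ℝ => Real.exp (G p - G q)) :=
      Real.continuous_exp.comp (continuous_const.sub hGcont)
    set F : ℝ → ℝ := fun τ => Real.exp (G p - G τ) * ⟪JL (u (xbar τ)), Wx τ⟫_ℝ with hFdef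
    have hFc : Continuous F := hexpc.mul (hJLuc.inner hWxc)
    have hMu : MuOpen u xbar w pu pd ε p t = ε * ∫ τ in pu..(min p pd), F τ := by
      rw [MuOpen, if_neg (not_lt.2 hcase)]
      congr 1
      apply intervalIntegral.integral_congr
      intro τ hτ
      simp only [hGsub, hFdef, hWxdef, JL_apply]
    have hMext : (∫ τ in pu..(min p pd), F τ) = ∫ τ in pu..p, F τ := by
      rcases le_or_gt p pd with h | h
      · rw [min_eq_left h]
      · rw [min_eq_right h.le]
        have hzero : ∀ τ ∈ Set.uIcc pd p, F τ = 0 := by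
          intro τ hτ
          rw [Set.uIcc_of_le h.le] at hτ
          have hWx0 : Wx τ = 0 := hopen _ _ ⟨τ, Or.inr hτ.1, by simp [hδ]⟩
          simp [hFdef, hWx0]
        have h2 : (∫ τ in pd..p, F τ) = 0 := by
          rw [intervalIntegral.integral_congr hzero]
          simp
        have h3 := intervalIntegral.integral_add_adjacent_intervals
          (hFc.intervalIntegrable (μ := MeasureTheory.volume) pu pd) (hFc.intervalIntegrable (μ := MeasureTheory.volume) pd p)
        linarith only [h2, h3]
    set H : ℝ → ℝ := fun q =>
      Real.exp (G p - G q) * ⟪JL (u (xbar q)), R q + ε • WY q - ε • Wx q⟫_ℝ with hHdef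
    have hHc : Continuous H :=
      hexpc.mul (hJLuc.inner ((hRc.add (hWYc.const_smul ε)).sub (hWxc.const_smul ε)))
    have hI1c : Continuous (fun q : ℝ =>
        Real.exp (G p - G q) * ⟪JL (u (xbar q)), R q + ε • WY q⟫_ℝ) :=
      hexpc.mul (hJLuc.inner (hRc.add (hWYc.const_smul ε)))
    have hI2c : Continuous (fun q : ℝ => ε * F q) := continuous_const.mul hFc
    have hdiff : m p - MuOpen u xbar w pu pd ε p t = ∫ q in pu..p, H q := by
      rw [hMu, hMext, hmp2, ← intervalIntegral.integral_const_mul,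
        ← intervalIntegral.integral_sub
          (hI1c.intervalIntegrable (μ := MeasureTheory.volume) pu p)
          (hI2c.intervalIntegrable (μ := MeasureTheory.volume) pu p)]
      apply intervalIntegral.integral_congr
      intro q hq
      simp only [hHdef, hFdef]
      rw [inner_sub_right, real_inner_smul_right]
      ring
    -- pointwise bound on H
    have hHbound : ∀ q ∈ Set.Ioc pu p, |H q| ≤ Cmain * ε ^ 2 := by
      intro q hq
      have hqIcc : q ∈ Set.Icc pu p := Set.Ioc_subset_Icc_self hq
      have hqL : q ∈ Set.Icc (-L) L := hIccL hqIcc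
      have hzq : ‖z q‖ ≤ ε * C₁ := hzb q hqIcc
      have hzq1 : ‖z q‖ ≤ 1 := le_trans hzq hεC₁1
      -- exp factor
      have hexp : Real.exp (G p - G q) ≤ eB := by
        rw [heBdef]
        apply Real.exp_le_exp.2
        have h1 : G p - G q = ∫ ξ in q..p, div2 u (xbar ξ) := (hGsub q).symm
        rw [h1]
        have h2 : ‖∫ ξ in q..p, div2 u (xbar ξ)‖ ≤ Dmax * |p - q| := by
          apply intervalIntegral.norm_integral_le_of_norm_le_const
          intro ξ hξ
          rw [Set.uIoc_of_le hq.2] at hξ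
          rw [Real.norm_eq_abs]
          exact hDmax ξ (hIccL ⟨le_trans hqIcc.1 hξ.1.le, hξ.2⟩)
        rw [Real.norm_eq_abs] at h2
        have h3 : |p - q| ≤ 2 * L := by
          rw [abs_of_nonneg (by linarith [hq.2])]
          linarith [hq.1]
        calc (∫ ξ in q..p, div2 u (xbar ξ)) ≤ |∫ ξ in q..p, div2 u (xbar ξ)| := le_abs_self _
          _ ≤ Dmax * |p - q| := h2
          _ ≤ Dmax * (2*L) := mul_le_mul_of_nonneg_left h3 hDmax0
      have hexp0 : 0 ≤ Real.exp (G p - G q) := (Real.exp_pos _).le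
      -- R bound
      have hRq : ‖R q‖ ≤ C₂ * (ε * C₁) ^ 2 := by
        have hball : Metric.closedBall (xbar q) 1 ⊆ S :=
          Metric.closedBall_subset_cthickening (Set.mem_image_of_mem xbar hqL) 1
        have hzq1' : ‖Y q - xbar q‖ ≤ 1 := hzq1
        have hzq' : ‖Y q - xbar q‖ ≤ ε * C₁ := hzq
        have htay := taylor_bound hu hC₂ (x := xbar q) (y := Y q) hzq1' hball
        refine le_trans htay ?_
        have h8 : ‖Y q - xbar q‖ ^ 2 ≤ (ε * C₁) ^ 2 :=
          pow_le_pow_left₀ (norm_nonneg _) hzq' 2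
        exact mul_le_mul_of_nonneg_left h8 hC₂0
      -- w difference bound
      have hWdiff : ‖WY q - Wx q‖ ≤ Kw * (ε * C₁) := by
        have h1 := (hwLip (q + t - p)).dist_le_mul (Y q) (xbar q)
        rw [dist_eq_norm, dist_eq_norm] at h1
        refine le_trans h1 ?_
        have hzq' : ‖Y q - xbar q‖ ≤ ε * C₁ := hzq
        exact mul_le_mul_of_nonneg_left hzq' Kw.coe_nonneg
      -- combine
      have hnorm2 : ‖R q + ε • WY q - ε • Wx q‖ ≤ C₂ * (ε*C₁)^2 + ε * (Kw * (ε * C₁)) := by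
        have heq : R q + ε • WY q - ε • Wx q = R q + ε • (WY q - Wx q) := by
          rw [smul_sub]; abel
        rw [heq]
        refine le_trans (norm_add_le _ _) (add_le_add hRq ?_)
        rw [norm_smul, Real.norm_eq_abs, abs_of_pos hεpos]
        exact mul_le_mul_of_nonneg_left hWdiff hεpos.le
      have hinner : |⟪JL (u (xbar q)), R q + ε • WY q - ε • Wx q⟫_ℝ|
          ≤ Umax * (C₂ * (ε*C₁)^2 + ε * (Kw * (ε * C₁))) := by
        refine le_trans (abs_real_inner_le_norm _ _) ?_
        have hJn : ‖JL (u (xbar q))‖ = ‖u (xbar q)‖ := Jrot_norm _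
        rw [hJn]
        exact mul_le_mul (hUmax q hqL) hnorm2 (norm_nonneg _) hUmax0
      have : |H q| = Real.exp (G p - G q) * |⟪JL (u (xbar q)), R q + ε • WY q - ε • Wx q⟫_ℝ| := by
        rw [hHdef]
        rw [abs_mul, abs_of_nonneg hexp0]
      rw [this]
      calc Real.exp (G p - G q) * |⟪JL (u (xbar q)), R q + ε • WY q - ε • Wx q⟫_ℝ|
          ≤ eB * (Umax * (C₂ * (ε*C₁)^2 + ε * (Kw * (ε * C₁)))) := by
            apply mul_le_mul hexp hinner (abs_nonneg _) (by rw [heBdef]; positivity)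
        _ = Cmain * ε ^ 2 := by rw [hCmaindef]; ring
    -- integral bound
    have hint : |m p - MuOpen u xbar w pu pd ε p t| ≤ 2*L*Cmain * ε ^ 2 := by
      rw [hdiff]
      have h1 : ‖∫ q in pu..p, H q‖ ≤ Cmain * ε ^ 2 * |p - pu| := by
        apply intervalIntegral.norm_integral_le_of_norm_le_const
        intro q hq
        rw [Set.uIoc_of_le hcase] at hq
        rw [Real.norm_eq_abs]
        exact hHbound q hq
      rw [Real.norm_eq_abs] at h1
      have h2 : |p - pu| ≤ 2*L := by
        rw [abs_of_nonneg (sub_nonneg.2 hcase)]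
        exact hplen
      calc |∫ q in pu..p, H q| ≤ Cmain * ε ^ 2 * |p - pu| := h1
        _ ≤ Cmain * ε ^ 2 * (2*L) := mul_le_mul_of_nonneg_left h2 (by positivity)
        _ = 2*L*Cmain * ε ^ 2 := by ring
    -- final assembly
    have hXt : X t = Y p := by simp [hYdef, show p + t - p = t by ring]
    have hupos : 0 < ‖u (xbar p)‖ := norm_pos_iff.2 (hune p)
    have hinner2 : ⟪X t - xbar p, (‖u (xbar p)‖)⁻¹ • Jrot (u (xbar p))⟫_ℝ
        = m p / ‖u (xbar p)‖ := by
      rw [hXt]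
      rw [real_inner_smul_right, real_inner_comm, div_eq_inv_mul]
      rfl
    rw [hinner2, div_sub_div_same, abs_div, abs_of_pos hupos]
    have humin2 : umin ≤ ‖u (xbar p)‖ := huminle p hp
    calc |m p - MuOpen u xbar w pu pd ε p t| / ‖u (xbar p)‖
        ≤ (2*L*Cmain * ε ^ 2) / umin := by
          gcongr
      _ = (2*L*Cmain/umin) * ε ^ 2 := by ring
      _ ≤ (2*L*Cmain/umin + 1) * ε ^ 2 := by
          have h9 := sq_nonneg ε
          ring_nf
          linarith only [h9]
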